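/- Let (Ω, ℙ) be a probability space, λ > 0, and T : Ω → ℝ a nonnegative random variable with ℙ(T > t) = exp(−λ t) for all t ≥ 0. Let S be a measurable space and Y : Ω → S a measurable map. Suppose that for every t > 0, every integer n ≥ 1, and every measurable set A ⊆ S, ℙ(Y ∈ A and (n−1)t < T ≤ nt) = ℙ(Y ∈ A and T ≤ t)·exp(−λ(n−1)t). Then T and Y are independent random variables. -/

import Mathlib

open MeasureTheory

/-- If `T` is exponentially distributed with rate `l` and, for every
`t > 0`, every `n ≥ 1` and every measurable `A`,
`P(Y ∈ A, (n-1)t < T ≤ nt) = P(Y ∈ A, T ≤ t) · exp(-l·(n-1)·t)`,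
then `T` and `Y` are independent. -/
theorem indep_of_exit_time_identity
    {Ω S : Type*} [MeasurableSpace Ω] [MeasurableSpace S]
    (P : Measure Ω) [IsProbabilityMeasure P]
    (l : ℝ) (hl : 0 < l)
    (T : Ω → ℝ) (hTmeas : Measurable T) (hTnonneg : ∀ ω, 0 ≤ T ω)
    (hsurv : ∀ t : ℝ, 0 ≤ t →
      P {ω | t < T ω} = ENNReal.ofReal (Real.exp (-l * t)))
    (Y : Ω → S) (hYmeas : Measurable Y)
    (hkey : ∀ t : ℝ, 0 < t → ∀ n : ℕ, 1 ≤ n → ∀ A : Set S, MeasurableSet A →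
      P {ω | Y ω ∈ A ∧ ((n : ℝ) - 1) * t < T ω ∧ T ω ≤ (n : ℝ) * t}
        = P {ω | Y ω ∈ A ∧ T ω ≤ t}
            * ENNReal.ofReal (Real.exp (-l * (((n : ℝ) - 1) * t)))) :
    ProbabilityTheory.IndepFun T Y P := by
  -- P(T ≤ 0) = 0
  have hT0 : P {ω | T ω ≤ 0} = 0 := by
    have h := hsurv 0 le_rfl
    simp only [mul_zero, Real.exp_zero, ENNReal.ofReal_one] at h
    have hc : {ω | T ω ≤ 0} = {ω | (0:ℝ) < T ω}ᶜ := by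
      ext ω; simp [not_lt]
    rw [hc, measure_compl (measurableSet_lt measurable_const hTmeas) (measure_ne_top _ _), h,
      measure_univ, tsub_self]
  -- cdf of T
  have hcdf : ∀ t : ℝ, 0 ≤ t → P {ω | T ω ≤ t}
      = ENNReal.ofReal (1 - Real.exp (-l * t)) := by
    intro t ht
    have hc : {ω | T ω ≤ t} = {ω | t < T ω}ᶜ := by ext ω; simp [not_lt]
    rw [hc, measure_compl (measurableSet_lt measurable_const hTmeas) (measure_ne_top _ _),
      measure_univ, hsurv t ht, ← ENNReal.ofReal_one,
      ← ENNReal.ofReal_sub _ (Real.exp_nonneg _)]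
  -- main identity
  have main : ∀ A : Set S, MeasurableSet A → ∀ t : ℝ, 0 < t →
      P {ω | Y ω ∈ A ∧ T ω ≤ t} = P (Y ⁻¹' A) * P {ω | T ω ≤ t} := by
    intro A hA t ht
    set e : ℝ := Real.exp (-l * t) with he_def
    have he0 : 0 < e := Real.exp_pos _
    have he1 : e < 1 := by
      rw [he_def, ← Real.exp_zero]
      exact Real.exp_lt_exp.2 (by nlinarith)
    set c : ENNReal := P {ω | Y ω ∈ A ∧ T ω ≤ t} with hc_def
    set B : ℕ → Set Ω := fun n =>
      {ω | Y ω ∈ A ∧ (n : ℝ) * t < T ω ∧ T ω ≤ ((n : ℝ) + 1) * t} with hB_def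
    have hBmeas : ∀ n, MeasurableSet (B n) := fun n =>
      (hYmeas hA).inter ((hTmeas measurableSet_Ioi).inter (hTmeas measurableSet_Iic))
    have hBdisj : Pairwise (Function.onFun Disjoint B) := by
      intro m n hmn
      wlog hlt : m < n generalizing m n
      · exact (this hmn.symm (by omega)).symm
      refine Set.disjoint_left.2 fun ω hm hn => ?_
      have h1 : T ω ≤ ((m:ℝ) + 1) * t := hm.2.2
      have h2 : (n:ℝ) * t < T ω := hn.2.1
      have : (m:ℝ) + 1 ≤ (n:ℝ) := by exact_mod_cast hlt
      nlinarith
    have hBval : ∀ n, P (B n) = c * ENNReal.ofReal e ^ n := by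
      intro n
      have h := hkey t ht (n + 1) (by omega) A hA
      have hcast : ((n + 1 : ℕ) : ℝ) - 1 = (n : ℝ) := by push_cast; ring
      have hcast2 : ((n + 1 : ℕ) : ℝ) = (n : ℝ) + 1 := by push_cast; ring
      rw [hcast, hcast2] at h
      rw [hB_def]
      simp only []
      rw [h, ← hc_def]
      congr 1
      rw [← ENNReal.ofReal_pow he0.le]
      congr 1
      rw [he_def, ← Real.exp_nat_mul]
      congr 1
      ring
    have hUnion : (⋃ n, B n) = {ω | Y ω ∈ A ∧ 0 < T ω} := by
      ext ω
      simp only [Set.mem_iUnion, hB_def, Set.mem_setOf_eq]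
      constructor
      · rintro ⟨n, hYA, hlt, _⟩
        exact ⟨hYA, lt_of_le_of_lt (by positivity) hlt⟩
      · rintro ⟨hYA, hpos⟩
        set r : ℝ := T ω / t with hr_def
        have hr : 0 < r := div_pos hpos ht
        have hceil : 1 ≤ ⌈r⌉₊ := Nat.one_le_ceil_iff.2 hr
        refine ⟨⌈r⌉₊ - 1, hYA, ?_, ?_⟩
        · have h1 : ((⌈r⌉₊ - 1 : ℕ) : ℝ) = (⌈r⌉₊ : ℝ) - 1 := by
            push_cast [Nat.cast_sub hceil]; ring
          have h2 : (⌈r⌉₊ : ℝ) < r + 1 := Nat.ceil_lt_add_one hr.le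
          have h3 : ((⌈r⌉₊ - 1 : ℕ) : ℝ) < r := by rw [h1]; linarith
          calc ((⌈r⌉₊ - 1 : ℕ) : ℝ) * t < r * t := by
                exact mul_lt_mul_of_pos_right h3 ht
            _ = T ω := by rw [hr_def]; field_simp
        · have h1 : ((⌈r⌉₊ - 1 : ℕ) : ℝ) + 1 = (⌈r⌉₊ : ℝ) := by
            push_cast [Nat.cast_sub hceil]; ring
          have h2 : r ≤ (⌈r⌉₊ : ℝ) := Nat.le_ceil r
          calc T ω = r * t := by rw [hr_def]; field_simp
            _ ≤ (⌈r⌉₊ : ℝ) * t := mul_le_mul_of_nonneg_right h2 ht.le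
            _ = (((⌈r⌉₊ - 1 : ℕ) : ℝ) + 1) * t := by rw [h1]
    have hYA_eq : P {ω | Y ω ∈ A ∧ 0 < T ω} = P (Y ⁻¹' A) := by
      refine le_antisymm (measure_mono fun ω h => h.1) ?_
      calc P (Y ⁻¹' A) ≤ P ({ω | Y ω ∈ A ∧ 0 < T ω} ∪ {ω | T ω ≤ 0}) := by
            refine measure_mono fun ω h => ?_
            by_cases h0 : 0 < T ω
            · exact Or.inl ⟨h, h0⟩
            · exact Or.inr (not_lt.1 h0)
        _ ≤ P {ω | Y ω ∈ A ∧ 0 < T ω} + P {ω | T ω ≤ 0} := measure_union_le _ _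
        _ = P {ω | Y ω ∈ A ∧ 0 < T ω} := by rw [hT0, add_zero]
    have hsum : P (Y ⁻¹' A) = c * (1 - ENNReal.ofReal e)⁻¹ := by
      rw [← hYA_eq, ← hUnion, measure_iUnion hBdisj hBmeas]
      simp only [hBval]
      rw [ENNReal.tsum_mul_left, ENNReal.tsum_geometric]
    have h1me : (1 : ENNReal) - ENNReal.ofReal e = ENNReal.ofReal (1 - e) := by
      rw [ENNReal.ofReal_sub _ he0.le, ENNReal.ofReal_one]
    have hne0 : ENNReal.ofReal (1 - e) ≠ 0 := by
      simp [ENNReal.ofReal_eq_zero, not_le]; linarith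
    have hcval : c = P (Y ⁻¹' A) * ENNReal.ofReal (1 - e) := by
      rw [hsum, h1me, mul_assoc, ENNReal.inv_mul_cancel hne0 ENNReal.ofReal_ne_top,
        mul_one]
    rw [hcval, hcdf t ht.le, he_def]
  -- conclude independence via extension on Iic
  rw [ProbabilityTheory.indepFun_iff_measure_inter_preimage_eq_mul]
  intro s A hs hA
  have hfin : IsFiniteMeasure ((P.restrict (Y ⁻¹' A)).map T) := by
    constructor
    rw [Measure.map_apply hTmeas MeasurableSet.univ, Set.preimage_univ,
      Measure.restrict_apply MeasurableSet.univ, Set.univ_inter]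
    exact measure_lt_top P _
  have hIic : ∀ a : ℝ, ((P.restrict (Y ⁻¹' A)).map T) (Set.Iic a)
      = (P (Y ⁻¹' A) • P.map T) (Set.Iic a) := by
    intro a
    rw [Measure.map_apply hTmeas measurableSet_Iic,
      Measure.restrict_apply (hTmeas measurableSet_Iic),
      Measure.smul_apply, Measure.map_apply hTmeas measurableSet_Iic, smul_eq_mul]
    have hset : T ⁻¹' Set.Iic a ∩ Y ⁻¹' A = {ω | Y ω ∈ A ∧ T ω ≤ a} := by
      ext ω; simp [Set.mem_setOf_eq, and_comm]
    have hset2 : T ⁻¹' Set.Iic a = {ω | T ω ≤ a} := rfl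
    rw [hset, hset2]
    rcases le_or_gt a 0 with ha | ha
    · have hz : P {ω | T ω ≤ a} = 0 :=
        le_antisymm (le_trans (measure_mono fun ω h => le_trans h ha) hT0.le)
          zero_le
      have hz2 : P {ω | Y ω ∈ A ∧ T ω ≤ a} = 0 :=
        le_antisymm (le_trans (measure_mono fun ω h => h.2) hz.le) zero_le
      rw [hz, hz2, mul_zero]
    · exact main A hA a ha
  have hμeq : (P.restrict (Y ⁻¹' A)).map T = P (Y ⁻¹' A) • P.map T :=
    @Measure.ext_of_Iic ℝ _ _ _ _ _ _ _ _ hfin hIic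
  have := congrArg (fun μ : Measure ℝ => μ s) hμeq
  simp only [Measure.map_apply hTmeas hs, Measure.restrict_apply (hTmeas hs),
    Measure.smul_apply, smul_eq_mul] at this
  rw [this, mul_comm]
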